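/- Let n ≥ 1 and 1 ≤ q < 2. Let ρ be a nonnegative integrable function with mass M, center of mass at the origin (∫ y ρ(y) dy = 0), and support contained in the ball B(0,R). Then for any x with |x| = R, the attraction term satisfies −∫ x·(x−y) |x−y|^(q-2) ρ(y) dy ≤ −2^(q-2) M R^q. -/

import Mathlib

open MeasureTheory Metric RealInnerProductSpace

theorem stmt6 (n : ℕ) (hn : 1 ≤ n) (q : ℝ) (hq1 : 1 ≤ q) (hq2 : q < 2)
    (R M : ℝ) (hR : 0 < R)
    (ρ : EuclideanSpace ℝ (Fin n) → ℝ)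
    (hρ0 : ∀ y, 0 ≤ ρ y) (hρint : Integrable ρ) (hM : ∫ y, ρ y = M)
    (hsupp : Function.support ρ ⊆ Metric.ball (0 : EuclideanSpace ℝ (Fin n)) R)
    (hcm : ∫ y, ρ y • y = (0 : EuclideanSpace ℝ (Fin n)))
    (x : EuclideanSpace ℝ (Fin n)) (hx : ‖x‖ = R) :
    -(∫ y, ⟪x, x - y⟫ * ‖x - y‖ ^ (q - 2) * ρ y) ≤
      -(2 ^ (q - 2) * M * R ^ q) := by
  have hρmeas := hρint.aestronglyMeasurable
  have hsupp' : ∀ y, ρ y ≠ 0 → ‖y‖ < R := by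
    intro y hy
    have := hsupp (Function.mem_support.mpr hy)
    simpa [mem_ball, dist_eq_norm] using this
  -- key pointwise facts on the support
  have key : ∀ y, ρ y ≠ 0 →
      0 < ‖x - y‖ ∧ ‖x - y‖ ≤ 2 * R ∧ 0 ≤ ⟪x, x - y⟫ := by
    intro y hy
    have h1 : ‖y‖ < R := hsupp' y hy
    have hnn : ‖x‖ - ‖y‖ ≤ ‖x - y‖ := norm_sub_norm_le x y
    have hpos : 0 < ‖x - y‖ := by rw [hx] at hnn; linarith
    have hle : ‖x - y‖ ≤ 2 * R := by
      have := norm_sub_le x y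
      rw [hx] at this; linarith
    have hinner : 0 ≤ ⟪x, x - y⟫ := by
      rw [inner_sub_right, real_inner_self_eq_norm_sq]
      have := real_inner_le_norm x y
      rw [hx] at this
      nlinarith
    exact ⟨hpos, hle, hinner⟩
  -- integrability of y ↦ ρ y • y
  have hv : Integrable (fun y => ρ y • y) := by
    apply Integrable.mono (hρint.const_mul R)
      (hρmeas.smul aestronglyMeasurable_id)
    filter_upwards with y
    by_cases hy : ρ y = 0
    · simp [hy]
    · have h1 := (hsupp' y hy).le
      have h0 := hρ0 y
      show ‖ρ y • id y‖ ≤ ‖R * ρ y‖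
      rw [norm_smul, Real.norm_eq_abs, Real.norm_eq_abs, abs_of_nonneg h0,
        abs_of_nonneg (by positivity : (0:ℝ) ≤ R * ρ y)]
      simp only [id_eq]
      nlinarith [mul_le_mul_of_nonneg_left h1 h0]
  have h1 : Integrable (fun y => ⟪x, ρ y • y⟫) := hv.const_inner x
  have h2 : Integrable (fun y => ‖x‖ ^ 2 * ρ y) := hρint.const_mul _
  have heq : ∀ y, ‖x‖ ^ 2 * ρ y - ⟪x, ρ y • y⟫ = ⟪x, x - y⟫ * ρ y := by
    intro y
    rw [inner_sub_right, real_inner_self_eq_norm_sq, real_inner_smul_right]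
    ring
  have hI : Integrable (fun y => ⟪x, x - y⟫ * ρ y) :=
    (h2.sub h1).congr (Filter.Eventually.of_forall fun y => heq y)
  have hval : ∫ y, ⟪x, x - y⟫ * ρ y = R ^ 2 * M := by
    rw [← integral_congr_ae (Filter.Eventually.of_forall fun y => heq y)]
    rw [integral_sub h2 h1, integral_inner hv x, hcm, inner_zero_right,
      integral_const_mul, hM, hx]
    ring
  -- integrability of the full integrand
  have hfint : Integrable (fun y => ⟪x, x - y⟫ * ‖x - y‖ ^ (q - 2) * ρ y) := by
    apply Integrable.mono (hρint.const_mul (R * (2 * R) ^ (q - 1)))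
    · have m1 : Measurable fun y : EuclideanSpace ℝ (Fin n) =>
          ⟪x, x - y⟫ * ‖x - y‖ ^ (q - 2) := by
        apply Measurable.mul
        · exact (continuous_const.inner (continuous_const.sub continuous_id)).measurable
        · exact ((continuous_const.sub continuous_id).norm.measurable).pow_const (q - 2)
      exact m1.aestronglyMeasurable.mul hρmeas
    · filter_upwards with y
      by_cases hy : ρ y = 0
      · simp [hy]
      · obtain ⟨hpos, hle, hinn⟩ := key y hy
        have h0 := hρ0 y
        set t := ‖x - y‖ with ht
        have habs : |⟪x, x - y⟫| ≤ R * t := by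
          have := abs_real_inner_le_norm x (x - y)
          rwa [hx] at this
        have htq : 0 ≤ t ^ (q - 2) := Real.rpow_nonneg hpos.le _
        have hmul : t * t ^ (q - 2) = t ^ (q - 1) := by
          rw [show q - 1 = 1 + (q - 2) by ring, Real.rpow_add hpos, Real.rpow_one]
        have hrb : t ^ (q - 1) ≤ (2 * R) ^ (q - 1) :=
          Real.rpow_le_rpow hpos.le hle (by linarith)
        have h2Rq : 0 ≤ (2 * R) ^ (q - 1) := Real.rpow_nonneg (by linarith) _
        rw [Real.norm_eq_abs, Real.norm_eq_abs, abs_mul, abs_mul,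
          abs_of_nonneg htq, abs_of_nonneg h0,
          abs_of_nonneg (by positivity : (0:ℝ) ≤ R * (2 * R) ^ (q - 1) * ρ y)]
        calc |⟪x, x - y⟫| * t ^ (q - 2) * ρ y
            ≤ (R * t) * t ^ (q - 2) * ρ y := by
              apply mul_le_mul_of_nonneg_right _ h0
              exact mul_le_mul_of_nonneg_right habs htq
          _ = R * t ^ (q - 1) * ρ y := by rw [mul_assoc R t, hmul]
          _ ≤ R * (2 * R) ^ (q - 1) * ρ y := by
              apply mul_le_mul_of_nonneg_right _ h0
              exact mul_le_mul_of_nonneg_left hrb hR.le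
  -- pointwise lower bound leading to the monotonicity of integrals
  have hnonneg : ∀ y, 0 ≤ (2 * R) ^ (q - 2) * (⟪x, x - y⟫ * ρ y) := by
    intro y
    by_cases hy : ρ y = 0
    · simp [hy]
    · obtain ⟨hpos, hle, hinn⟩ := key y hy
      have h0 := hρ0 y
      have h2R : 0 ≤ (2 * R) ^ (q - 2) := Real.rpow_nonneg (by linarith) _
      positivity
  have hle : ∀ y, (2 * R) ^ (q - 2) * (⟪x, x - y⟫ * ρ y) ≤
      ⟪x, x - y⟫ * ‖x - y‖ ^ (q - 2) * ρ y := by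
    intro y
    by_cases hy : ρ y = 0
    · simp [hy]
    · obtain ⟨hpos, hle, hinn⟩ := key y hy
      have h0 := hρ0 y
      have hr : (2 * R) ^ (q - 2) ≤ ‖x - y‖ ^ (q - 2) :=
        Real.rpow_le_rpow_of_nonpos hpos hle (by linarith)
      have h2R : 0 ≤ (2 * R) ^ (q - 2) := Real.rpow_nonneg (by linarith) _
      nlinarith [mul_le_mul_of_nonneg_right (mul_le_mul_of_nonneg_left hr hinn) h0]
  have hmono : ∫ y, (2 * R) ^ (q - 2) * (⟪x, x - y⟫ * ρ y) ≤
      ∫ y, ⟪x, x - y⟫ * ‖x - y‖ ^ (q - 2) * ρ y :=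
    integral_mono_of_nonneg (Filter.Eventually.of_forall hnonneg) hfint
      (Filter.Eventually.of_forall hle)
  have hlower : ∫ y, (2 * R) ^ (q - 2) * (⟪x, x - y⟫ * ρ y)
      = (2 * R) ^ (q - 2) * (R ^ 2 * M) := by
    rw [integral_const_mul, hval]
  have hsplit : (2 * R) ^ (q - 2) = 2 ^ (q - 2) * R ^ (q - 2) :=
    Real.mul_rpow (by norm_num) hR.le
  have hRq : R ^ q = R ^ (q - 2) * R ^ 2 := by
    rw [show q = (q - 2) + 2 by ring, Real.rpow_add hR]
    norm_num
  have : 2 ^ (q - 2) * M * R ^ q ≤ ∫ y, ⟪x, x - y⟫ * ‖x - y‖ ^ (q - 2) * ρ y := by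
    rw [hlower] at hmono
    calc 2 ^ (q - 2) * M * R ^ q = (2 * R) ^ (q - 2) * (R ^ 2 * M) := by
          rw [hsplit, hRq]; ring
      _ ≤ _ := hmono
  linarith
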